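/- Let T be a tree of order at least 3, let v be a vertex of T with a leaf-neighbor u, and let D be a disjunctive dominating set of T. Then the set D′ defined by D′ = (D \ (leaf-neighbors of v)) ∪ {v} if D contains a leaf-neighbor of v, and D′ = D otherwise, is a disjunctive dominating set of T − u of cardinality at most |D|. -/

import Mathlib

open SimpleGraph

/-- A disjunctive dominating set: every vertex not in `D` has a neighbor in `D`
or at least two vertices of `D` at distance exactly `2`. -/
def IsDisjDomSet {V : Type*} (G : SimpleGraph V) (D : Set V) : Prop :=
  ∀ v ∉ D, (∃ u ∈ D, G.Adj v u) ∨
    (∃ w₁ ∈ D, ∃ w₂ ∈ D, w₁ ≠ w₂ ∧ G.dist v w₁ = 2 ∧ G.dist v w₂ = 2)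

/-- The disjunctive domination number. -/
noncomputable def disjDomNum {V : Type*} (G : SimpleGraph V) : ℕ :=
  sInf {n | ∃ D : Set V, IsDisjDomSet G D ∧ D.ncard = n}

/-- A leaf is a vertex of degree one. -/
def IsLeaf {V : Type*} (G : SimpleGraph V) (v : V) : Prop :=
  (G.neighborSet v).ncard = 1

/-- A support vertex is a vertex adjacent to a leaf. -/
def IsSupport {V : Type*} (G : SimpleGraph V) (v : V) : Prop :=
  ∃ u, G.Adj v u ∧ IsLeaf G u

/-- Any neighbor of a leaf equals its unique neighbor. -/
lemma IsLeaf.nbr_eq {V : Type*} {G : SimpleGraph V} {w v m : V}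
    (hl : IsLeaf G w) (hv : G.Adj v w) (hm : G.Adj m w) : m = v := by
  obtain ⟨a, ha⟩ := Set.ncard_eq_one.mp hl
  have h1 : v ∈ G.neighborSet w := hv.symm
  have h2 : m ∈ G.neighborSet w := hm.symm
  rw [ha, Set.mem_singleton_iff] at h1 h2
  rw [h1, h2]

/-- A distance-two pair has a common neighbor. -/
lemma exists_mid {V : Type*} {G : SimpleGraph V} {x w : V}
    (h : G.dist x w = 2) : ∃ m, G.Adj x m ∧ G.Adj m w := by
  have hr : G.Reachable x w := Reachable.of_dist_ne_zero (by omega)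
  obtain ⟨p, hp⟩ := hr.exists_walk_length_eq_dist
  rw [h] at hp
  cases p with
  | nil => simp at hp
  | cons hadj q =>
    cases q with
    | nil => simp at hp
    | cons hadj2 r =>
      cases r with
      | nil => exact ⟨_, hadj, hadj2⟩
      | cons hadj3 s => simp [SimpleGraph.Walk.length_cons] at hp

lemma dist_ne_one_ne {V : Type*} {G : SimpleGraph V} {x w : V}
    (h : G.dist x w = 2) : ¬ G.Adj x w ∧ x ≠ w := by
  constructor
  · intro hadj
    rw [SimpleGraph.dist_eq_one_iff_adj.mpr hadj] at h
    omega
  · intro he; subst he; rw [SimpleGraph.dist_self] at h; omega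

/-- Distance two in an induced subgraph, given a middle vertex inside. -/
lemma induce_dist_two {V : Type*} {G : SimpleGraph V} {S : Set V}
    {x w : ↥S} {m : V} (hm : m ∈ S)
    (h1 : G.Adj (x : V) m) (h2 : G.Adj m (w : V))
    (hna : ¬ G.Adj (x : V) (w : V)) (hne : (x : V) ≠ (w : V)) :
    (G.induce S).dist x w = 2 := by
  have a1 : (G.induce S).Adj x ⟨m, hm⟩ := h1
  have a2 : (G.induce S).Adj ⟨m, hm⟩ w := h2
  have hle : (G.induce S).dist x w ≤ 2 := by
    have := SimpleGraph.dist_le (SimpleGraph.Walk.cons a1 (SimpleGraph.Walk.cons a2 SimpleGraph.Walk.nil))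
    simpa using this
  have hxw : x ≠ w := fun he => hne (congrArg Subtype.val he)
  have hpos : 0 < (G.induce S).dist x w :=
    SimpleGraph.Reachable.pos_dist_of_ne
      ⟨SimpleGraph.Walk.cons a1 (SimpleGraph.Walk.cons a2 SimpleGraph.Walk.nil)⟩ hxw
  have hno : (G.induce S).dist x w ≠ 1 := by
    intro h
    have hadj' : (G.induce S).Adj x w := SimpleGraph.dist_eq_one_iff_adj.mp h
    exact hna hadj'
  omega

lemma ncard_subtype {V : Type*} [Fintype V] {S D' : Set V} (hsub : D' ⊆ S) :
    {w : ↥S | (w : V) ∈ D'}.ncard = D'.ncard := by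
  classical
  have : {w : ↥S | (w : V) ∈ D'} = Subtype.val ⁻¹' D' := rfl
  rw [this]
  have himg : Subtype.val '' (Subtype.val ⁻¹' D' : Set ↥S) = D' := by
    rw [Set.image_preimage_eq_inter_range, Subtype.range_coe]
    exact Set.inter_eq_left.mpr hsub
  calc (Subtype.val ⁻¹' D' : Set ↥S).ncard
      = (Subtype.val '' (Subtype.val ⁻¹' D' : Set ↥S)).ncard :=
        (Set.ncard_image_of_injective _ Subtype.val_injective).symm
    _ = D'.ncard := by rw [himg]

theorem disjDomSet_delete_leaf {V : Type*} [Fintype V] (G : SimpleGraph V)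
    (hT : G.IsTree) (hn : 3 ≤ Fintype.card V) (v u : V)
    (hadj : G.Adj v u) (hu : IsLeaf G u)
    (D : Set V) (hD : IsDisjDomSet G D) (D' : Set V)
    (h1 : (∃ w ∈ D, G.Adj v w ∧ IsLeaf G w) →
      D' = (D \ {w | G.Adj v w ∧ IsLeaf G w}) ∪ {v})
    (h2 : (¬ ∃ w ∈ D, G.Adj v w ∧ IsLeaf G w) → D' = D) :
    IsDisjDomSet (G.induce {x | x ≠ u}) {w : ↥{x | x ≠ u} | (w : V) ∈ D'} ∧
    {w : ↥{x | x ≠ u} | (w : V) ∈ D'}.ncard ≤ D.ncard := by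
  classical
  set S : Set V := {x | x ≠ u} with hS
  have hvu : v ≠ u := G.ne_of_adj hadj
  have hvS : v ∈ S := hvu
  -- a vertex ≠ u that is adjacent in G gives adjacency in the induced graph,
  -- and u's only neighbor is v
  have hunbr : ∀ m : V, G.Adj m u → m = v := fun m hm => hu.nbr_eq hadj hm
  by_cases hw : ∃ w ∈ D, G.Adj v w ∧ IsLeaf G w
  · -- Case 1: D contains a leaf-neighbor of v
    obtain ⟨w₀, hw₀D, hw₀v, hw₀l⟩ := hw
    have hD' : D' = (D \ {w | G.Adj v w ∧ IsLeaf G w}) ∪ {v} := h1 ⟨w₀, hw₀D, hw₀v, hw₀l⟩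
    have huD' : u ∉ D' := by
      rw [hD']
      rintro (⟨-, hnl⟩ | hv)
      · exact hnl ⟨hadj, hu⟩
      · exact hvu hv.symm
    have hsub : D' ⊆ S := fun x hx => by
      intro he; rw [he] at hx; exact huD' hx
    have hvD' : v ∈ D' := by rw [hD']; exact Or.inr rfl
    constructor
    · intro x hx
      have hxu : (x : V) ≠ u := x.2
      have hxD' : (x : V) ∉ D' := hx
      have hxv : (x : V) ≠ v := fun he => hxD' (he ▸ hvD')
      by_cases hxD : (x : V) ∈ D
      · -- x ∈ D but x ∉ D', so x is a leaf-neighbor of v; v dominates it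
        have hxL : G.Adj v (x : V) ∧ IsLeaf G (x : V) := by
          by_contra hL
          exact hxD' (hD' ▸ Or.inl ⟨hxD, hL⟩)
        left
        refine ⟨⟨v, hvS⟩, hvD', ?_⟩
        exact hxL.1.symm
      · rcases hD (x : V) hxD with ⟨y, hyD, hxy⟩ | ⟨w₁, hw₁D, w₂, hw₂D, hne, hd₁, hd₂⟩
        · -- x has a neighbor y in D
          by_cases hyL : G.Adj v y ∧ IsLeaf G y
          · -- y is a leaf-neighbor of v adjacent to x, so x = v, contradiction
            exact absurd (hyL.2.nbr_eq hyL.1 hxy) hxv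
          · left
            have hyu : y ≠ u := by
              intro he; subst he
              exact hyL ⟨hadj, hu⟩
            refine ⟨⟨y, hyu⟩, ?_, ?_⟩
            · exact hD' ▸ Or.inl ⟨hyD, hyL⟩
            · exact hxy
        · -- two vertices of D at distance 2 from x
          by_cases hL : (G.Adj v w₁ ∧ IsLeaf G w₁) ∨ (G.Adj v w₂ ∧ IsLeaf G w₂)
          · -- one of them is a leaf-neighbor of v ⇒ x is adjacent to v
            left
            refine ⟨⟨v, hvS⟩, hvD', ?_⟩
            rcases hL with hL | hL
            · obtain ⟨m, hxm, hmw⟩ := exists_mid hd₁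
              have hmv : m = v := hL.2.nbr_eq hL.1 hmw
              subst hmv
              exact hxm
            · obtain ⟨m, hxm, hmw⟩ := exists_mid hd₂
              have hmv : m = v := hL.2.nbr_eq hL.1 hmw
              subst hmv
              exact hxm
          · rw [not_or] at hL
            right
            have hw₁u : w₁ ≠ u := by
              intro he; subst he; exact hL.1 ⟨hadj, hu⟩
            have hw₂u : w₂ ≠ u := by
              intro he; subst he; exact hL.2 ⟨hadj, hu⟩
            have hw₁D' : w₁ ∈ D' := by rw [hD']; exact Or.inl ⟨hw₁D, hL.1⟩
            have hw₂D' : w₂ ∈ D' := by rw [hD']; exact Or.inl ⟨hw₂D, hL.2⟩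
            refine ⟨⟨w₁, hw₁u⟩, hw₁D', ⟨w₂, hw₂u⟩, hw₂D',
                    fun he => hne (congrArg Subtype.val he), ?_, ?_⟩
            · obtain ⟨m, hxm, hmw⟩ := exists_mid hd₁
              have hmu : m ≠ u := by
                intro he; subst he
                exact hxv (hunbr _ hxm)
              obtain ⟨hna, hne'⟩ := dist_ne_one_ne hd₁
              exact induce_dist_two hmu hxm hmw hna hne'
            · obtain ⟨m, hxm, hmw⟩ := exists_mid hd₂
              have hmu : m ≠ u := by
                intro he; subst he
                exact hxv (hunbr _ hxm)
              obtain ⟨hna, hne'⟩ := dist_ne_one_ne hd₂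
              exact induce_dist_two hmu hxm hmw hna hne'
    · -- cardinality
      rw [ncard_subtype hsub, hD']
      have hfin : D.Finite := Set.toFinite D
      have h1' : ((D \ {w | G.Adj v w ∧ IsLeaf G w}) ∪ {v}).ncard ≤
          (D \ {w | G.Adj v w ∧ IsLeaf G w}).ncard + 1 := by
        have := Set.ncard_union_le (D \ {w | G.Adj v w ∧ IsLeaf G w}) {v}
        simpa using this
      have hsub2 : D \ {w | G.Adj v w ∧ IsLeaf G w} ⊆ D \ {w₀} := by
        rintro x ⟨hxD, hxL⟩
        exact ⟨hxD, fun he => hxL (by rw [Set.mem_singleton_iff] at he; rw [he]; exact ⟨hw₀v, hw₀l⟩)⟩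
      have h2' : (D \ {w | G.Adj v w ∧ IsLeaf G w}).ncard ≤ (D \ {w₀}).ncard :=
        Set.ncard_le_ncard hsub2 hfin.diff
      have h3' : (D \ {w₀}).ncard = D.ncard - 1 := by
        rw [← Set.ncard_diff_singleton_add_one hw₀D hfin]
        omega
      have hpos : 0 < D.ncard := (Set.ncard_pos hfin).mpr ⟨w₀, hw₀D⟩
      omega
  · -- Case 2: D' = D and u ∉ D
    have hD' : D' = D := h2 hw
    have huD : u ∉ D := fun huD => hw ⟨u, huD, hadj, hu⟩
    have hsub : D' ⊆ S := fun x hx he => by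
      rw [hD'] at hx; rw [he] at hx; exact huD hx
    constructor
    · intro x hx
      have hxu : (x : V) ≠ u := x.2
      have hxD : (x : V) ∉ D := fun h => hx (hD' ▸ h)
      rcases hD (x : V) hxD with ⟨y, hyD, hxy⟩ | ⟨w₁, hw₁D, w₂, hw₂D, hne, hd₁, hd₂⟩
      · left
        have hyu : y ≠ u := fun he => huD (he ▸ hyD)
        exact ⟨⟨y, hyu⟩, hD' ▸ hyD, hxy⟩
      · right
        have hw₁u : w₁ ≠ u := fun he => huD (he ▸ hw₁D)
        have hw₂u : w₂ ≠ u := fun he => huD (he ▸ hw₂D)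
        refine ⟨⟨w₁, hw₁u⟩, hD' ▸ hw₁D, ⟨w₂, hw₂u⟩, hD' ▸ hw₂D,
                fun he => hne (congrArg Subtype.val he), ?_, ?_⟩
        · obtain ⟨m, hxm, hmw⟩ := exists_mid hd₁
          have hmu : m ≠ u := by
            intro he; subst he
            have hx1 := hunbr _ hxm
            have hw1 := hunbr _ hmw.symm
            exact (dist_ne_one_ne hd₁).2 (hx1.trans hw1.symm)
          obtain ⟨hna, hne'⟩ := dist_ne_one_ne hd₁
          exact induce_dist_two hmu hxm hmw hna hne'
        · obtain ⟨m, hxm, hmw⟩ := exists_mid hd₂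
          have hmu : m ≠ u := by
            intro he; subst he
            have hx1 := hunbr _ hxm
            have hw1 := hunbr _ hmw.symm
            exact (dist_ne_one_ne hd₂).2 (hx1.trans hw1.symm)
          obtain ⟨hna, hne'⟩ := dist_ne_one_ne hd₂
          exact induce_dist_two hmu hxm hmw hna hne'
    · rw [ncard_subtype hsub, hD']
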